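/- Define K⁰_vEnt = {(t, v, x) ∈ ℝ × ℝ_{>0} × ℝ^n_{≥0} : ∑_{i=1}^n x_i log(x_i/v) ≤ t}, with the convention 0·log(0/v) = 0. Then the closure of K⁰_vEnt in ℝ^{n+2} equals K⁰_vEnt ∪ (ℝ_{≥0} × ℝ_{≥0} × {0}ⁿ). -/

import Mathlib

open Finset

private lemma aux_mul_log_ge (y : ℝ) (hy : 0 < y) :
    -(Real.exp 1)⁻¹ ≤ y * Real.log y := by
  have he : (0:ℝ) < Real.exp 1 := Real.exp_pos 1
  have h := Real.log_le_sub_one_of_pos (show (0:ℝ) < (y * Real.exp 1)⁻¹ by positivity)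
  rw [Real.log_inv, Real.log_mul hy.ne' he.ne', Real.log_exp] at h
  have h1 : -Real.log y ≤ (y * Real.exp 1)⁻¹ := by linarith
  have h2 : y * (-Real.log y) ≤ y * (y * Real.exp 1)⁻¹ :=
    mul_le_mul_of_nonneg_left h1 hy.le
  have h3 : y * (y * Real.exp 1)⁻¹ = (Real.exp 1)⁻¹ := by
    field_simp
  nlinarith

private lemma aux_term_lb (x v : ℝ) (hx : 0 ≤ x) (hv : 0 < v) :
    -(v * (Real.exp 1)⁻¹) ≤ x * Real.log (x / v) := by
  rcases eq_or_lt_of_le hx with h | h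
  · rw [← h]
    simp only [zero_mul]
    exact neg_nonpos.mpr (by positivity)
  · have hy : 0 < x / v := div_pos h hv
    have h1 := aux_mul_log_ge _ hy
    have h2 : v * (-(Real.exp 1)⁻¹) ≤ v * (x / v * Real.log (x / v)) :=
      mul_le_mul_of_nonneg_left h1 hv.le
    have h3 : v * (x / v * Real.log (x / v)) = x * Real.log (x / v) := by
      field_simp
    nlinarith

private lemma aux_term_eq (x v : ℝ) (hv : v ≠ 0) :
    x * Real.log (x / v) = x * Real.log x - x * Real.log v := by
  rcases eq_or_ne x 0 with h | h
  · simp [h]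
  · rw [Real.log_div h hv]; ring

theorem stmt6 (n : ℕ) :
    closure {p : ℝ × ℝ × (Fin n → ℝ) |
        0 < p.2.1 ∧ (∀ i, 0 ≤ p.2.2 i) ∧
          ∑ i, p.2.2 i * Real.log (p.2.2 i / p.2.1) ≤ p.1} =
    {p : ℝ × ℝ × (Fin n → ℝ) |
        0 < p.2.1 ∧ (∀ i, 0 ≤ p.2.2 i) ∧
          ∑ i, p.2.2 i * Real.log (p.2.2 i / p.2.1) ≤ p.1} ∪
    {p : ℝ × ℝ × (Fin n → ℝ) | 0 ≤ p.1 ∧ 0 ≤ p.2.1 ∧ p.2.2 = 0} := by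
  set K : Set (ℝ × ℝ × (Fin n → ℝ)) :=
    {p : ℝ × ℝ × (Fin n → ℝ) |
        0 < p.2.1 ∧ (∀ i, 0 ≤ p.2.2 i) ∧
          ∑ i, p.2.2 i * Real.log (p.2.2 i / p.2.1) ≤ p.1} with hK
  apply Set.Subset.antisymm
  · -- closure K ⊆ K ∪ B
    intro p hp
    obtain ⟨q, hqK, hq⟩ := mem_closure_iff_seq_limit.mp hp
    obtain ⟨t, v, x⟩ := p
    -- componentwise convergence
    have ht : Filter.Tendsto (fun k => (q k).1) Filter.atTop (nhds t) :=
      (continuous_fst.tendsto _).comp hq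
    have hv : Filter.Tendsto (fun k => (q k).2.1) Filter.atTop (nhds v) :=
      ((continuous_fst.comp continuous_snd).tendsto _).comp hq
    have hx : ∀ i, Filter.Tendsto (fun k => (q k).2.2 i) Filter.atTop (nhds (x i)) := by
      intro i
      exact (((continuous_apply i).comp (continuous_snd.comp continuous_snd)).tendsto _).comp hq
    have hvk : ∀ k, 0 < (q k).2.1 := fun k => (hqK k).1
    have hxk : ∀ k i, 0 ≤ (q k).2.2 i := fun k => (hqK k).2.1
    have hsum : ∀ k, ∑ i, (q k).2.2 i * Real.log ((q k).2.2 i / (q k).2.1) ≤ (q k).1 :=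
      fun k => (hqK k).2.2
    have hv0 : 0 ≤ v := ge_of_tendsto' hv fun k => (hvk k).le
    have hx0 : ∀ i, 0 ≤ x i := fun i => ge_of_tendsto' (hx i) fun k => hxk k i
    rcases eq_or_lt_of_le hv0 with hveq | hvpos
    · -- v = 0 : show p ∈ B
      right
      have hveq' : v = 0 := hveq.symm
      have hloga : Filter.Tendsto (fun k => Real.log ((q k).2.1)) Filter.atTop Filter.atBot := by
        apply Real.tendsto_log_nhdsGT_zero.comp
        apply tendsto_nhdsWithin_of_tendsto_nhds_of_eventually_within
        · exact hveq' ▸ hv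
        · exact Filter.Eventually.of_forall fun k => hvk k
      -- lower bound on the sum, per term
      have hlb : ∀ k i, -((q k).2.1 * (Real.exp 1)⁻¹)
          ≤ (q k).2.2 i * Real.log ((q k).2.2 i / (q k).2.1) :=
        fun k i => aux_term_lb _ _ (hxk k i) (hvk k)
      -- first show x = 0
      have hxzero : x = 0 := by
        by_contra hne
        obtain ⟨j, hj⟩ : ∃ j, x j ≠ 0 := by
          by_contra hall
          push_neg at hall
          exact hne (funext hall)
        have hxj : 0 < x j := lt_of_le_of_ne (hx0 j) (Ne.symm hj)
        -- the j-th term tends to atTop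
        have htermj : Filter.Tendsto
            (fun k => (q k).2.2 j * Real.log ((q k).2.2 j / (q k).2.1))
            Filter.atTop Filter.atTop := by
          have heq : ∀ k, (q k).2.2 j * Real.log ((q k).2.2 j / (q k).2.1)
              = (q k).2.2 j * Real.log ((q k).2.2 j) - (q k).2.2 j * Real.log ((q k).2.1) :=
            fun k => aux_term_eq _ _ (hvk k).ne'
          simp only [heq]
          have h1 : Filter.Tendsto (fun k => (q k).2.2 j * Real.log ((q k).2.2 j))
              Filter.atTop (nhds (x j * Real.log (x j))) :=
            (Real.continuous_mul_log.tendsto _).comp (hx j)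
          have h2 : Filter.Tendsto (fun k => (q k).2.2 j * Real.log ((q k).2.1))
              Filter.atTop Filter.atBot := by
            have := Filter.Tendsto.atBot_mul_pos hxj hloga (hx j)
            simpa [mul_comm] using this
          have h2' := Filter.tendsto_neg_atBot_atTop.comp h2
          simpa [sub_eq_add_neg, Function.comp_def] using h1.add_atTop h2'
        -- lower bound for the whole sum
        have hsumlb : ∀ k, (q k).2.2 j * Real.log ((q k).2.2 j / (q k).2.1)
            - n * ((q k).2.1 * (Real.exp 1)⁻¹) ≤ (q k).1 := by
          intro k
          refine le_trans ?_ (hsum k)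
          rw [← Finset.add_sum_erase _ _ (Finset.mem_univ j)]
          have hc : (0:ℝ) ≤ (q k).2.1 * (Real.exp 1)⁻¹ := by
            have := (hvk k).le
            positivity
          have hcard : ((Finset.univ.erase j).card : ℝ) ≤ (n : ℝ) := by
            have h1 : (Finset.univ.erase j).card ≤ (Finset.univ : Finset (Fin n)).card :=
              Finset.card_erase_le
            have h2 : (Finset.univ : Finset (Fin n)).card = n := by simp
            exact_mod_cast h1.trans_eq h2
          have hrest : -((n : ℝ) * ((q k).2.1 * (Real.exp 1)⁻¹))
              ≤ ∑ i ∈ Finset.univ.erase j, (q k).2.2 i * Real.log ((q k).2.2 i / (q k).2.1) := by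
            calc -((n : ℝ) * ((q k).2.1 * (Real.exp 1)⁻¹))
                ≤ ((Finset.univ.erase j).card : ℝ) * -((q k).2.1 * (Real.exp 1)⁻¹) := by
                  nlinarith
              _ = ∑ _i ∈ Finset.univ.erase j, -((q k).2.1 * (Real.exp 1)⁻¹) := by
                  rw [Finset.sum_const, nsmul_eq_mul]
              _ ≤ ∑ i ∈ Finset.univ.erase j, (q k).2.2 i * Real.log ((q k).2.2 i / (q k).2.1) :=
                  Finset.sum_le_sum fun i _ => hlb k i
          linarith
        -- lower bound tends to atTop
        have hlbtop : Filter.Tendsto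
            (fun k => (q k).2.2 j * Real.log ((q k).2.2 j / (q k).2.1)
              - n * ((q k).2.1 * (Real.exp 1)⁻¹)) Filter.atTop Filter.atTop := by
          have h2 : Filter.Tendsto (fun k => (n : ℝ) * ((q k).2.1 * (Real.exp 1)⁻¹))
              Filter.atTop (nhds 0) := by
            have := (hv.mul_const (Real.exp 1)⁻¹).const_mul (n : ℝ)
            simpa [hveq'] using this
          have := htermj.atTop_add h2.neg
          simpa [sub_eq_add_neg] using this
        exact not_tendsto_atTop_of_tendsto_nhds ht (Filter.tendsto_atTop_mono hsumlb hlbtop)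
      refine ⟨?_, hveq.le, hxzero⟩
      -- 0 ≤ t
      have hlb2 : ∀ k, -((n : ℝ) * ((q k).2.1 * (Real.exp 1)⁻¹)) ≤ (q k).1 := by
        intro k
        refine le_trans ?_ (hsum k)
        calc -((n : ℝ) * ((q k).2.1 * (Real.exp 1)⁻¹))
            = ∑ _i : Fin n, -((q k).2.1 * (Real.exp 1)⁻¹) := by
              rw [Finset.sum_const, nsmul_eq_mul]
              simp [mul_neg]
          _ ≤ _ := Finset.sum_le_sum fun i _ => hlb k i
      have h0 : Filter.Tendsto (fun k => -((n : ℝ) * ((q k).2.1 * (Real.exp 1)⁻¹)))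
          Filter.atTop (nhds 0) := by
        have := ((hv.mul_const (Real.exp 1)⁻¹).const_mul (n : ℝ)).neg
        simpa [hveq'] using this
      exact le_of_tendsto_of_tendsto' h0 ht hlb2
    · -- v > 0 : show p ∈ K by continuity
      left
      refine ⟨hvpos, hx0, ?_⟩
      have hsumtend : Filter.Tendsto
          (fun k => ∑ i, (q k).2.2 i * Real.log ((q k).2.2 i / (q k).2.1))
          Filter.atTop (nhds (∑ i, x i * Real.log (x i / v))) := by
        have heq : ∀ k, ∑ i, (q k).2.2 i * Real.log ((q k).2.2 i / (q k).2.1)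
            = ∑ i, ((q k).2.2 i * Real.log ((q k).2.2 i)
              - (q k).2.2 i * Real.log ((q k).2.1)) :=
          fun k => Finset.sum_congr rfl fun i _ => aux_term_eq _ _ (hvk k).ne'
        have heq2 : ∑ i, x i * Real.log (x i / v)
            = ∑ i, (x i * Real.log (x i) - x i * Real.log v) :=
          Finset.sum_congr rfl fun i _ => aux_term_eq _ _ hvpos.ne'
        simp only [heq, heq2]
        apply tendsto_finset_sum
        intro i _
        exact ((Real.continuous_mul_log.tendsto _).comp (hx i)).sub
          ((hx i).mul ((Real.continuousAt_log hvpos.ne').tendsto.comp hv))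
      exact le_of_tendsto_of_tendsto' hsumtend ht hsum
  · -- K ∪ B ⊆ closure K
    rintro p (hp | hp)
    · exact subset_closure hp
    · obtain ⟨t, v, x⟩ := p
      obtain ⟨htp, hvp, hxp⟩ := hp
      have hδ : Filter.Tendsto (fun k : ℕ => ((k : ℝ) + 1)⁻¹) Filter.atTop (nhds 0) := by
        simpa [one_div] using tendsto_one_div_add_atTop_nhds_zero_nat (𝕜 := ℝ)
      apply mem_closure_of_tendsto (b := (Filter.atTop : Filter ℕ)) (f := fun k : ℕ =>
        ((t, v + ((k : ℝ) + 1)⁻¹, fun _ : Fin n => ((k : ℝ) + 1)⁻¹) : ℝ × ℝ × (Fin n → ℝ)))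
      · refine Filter.Tendsto.prodMk_nhds tendsto_const_nhds
          (Filter.Tendsto.prodMk_nhds ?_ ?_)
        · simpa using (tendsto_const_nhds (x := v)).add hδ
        · have hx0' : x = 0 := hxp
          rw [hx0']
          exact tendsto_pi_nhds.mpr fun i => hδ
      · apply Filter.Eventually.of_forall
        intro k
        have hk : (0:ℝ) < ((k : ℝ) + 1)⁻¹ := by positivity
        have hvk' : (0:ℝ) < v + ((k : ℝ) + 1)⁻¹ := by linarith
        refine ⟨hvk', fun i => hk.le, ?_⟩
        show ∑ _i : Fin n, ((k : ℝ) + 1)⁻¹ *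
            Real.log (((k : ℝ) + 1)⁻¹ / (v + ((k : ℝ) + 1)⁻¹)) ≤ t
        refine le_trans (Finset.sum_nonpos fun i _ => ?_) htp
        apply mul_nonpos_of_nonneg_of_nonpos hk.le
        apply Real.log_nonpos (by positivity)
        rw [div_le_one hvk']
        linarith
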